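/- arXiv:2204.04684 — 4 statements merged into one kernel-verified Lean document; each statement's English description precedes it below -/
import Mathlib

section
/- Let $(r'_i)_{i\ge 1}$ be a sequence of nonnegative reals with $\sum_{i\ge 1} r'_i < 1$, and let $R' : \ell^1 \to \ell^1$ be the operator defined by $(R'x)_i = r'_i x_1 + x_{i+1}$. Then for every nonnegative $x \in \ell^1$, the $\ell^1$-norms $\|(R')^n x\|_1$ converge to $0$ as $n \to \infty$. -/
/-- The operator `R'` on sequences: `(R' x) i = r i * x 0 + x (i+1)`
(coordinates indexed from 0, so `x 0` plays the role of `x₁`: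
first column `(r'_1, r'_2, …)ᵀ` and `1`'s on the superdiagonal). -/
def renewalOp (r : ℕ → ℝ) (x : ℕ → ℝ) : ℕ → ℝ := fun i => r i * x 0 + x (i + 1)

/-- If `∑ r'_i < 1`, then `‖(R')^n x‖₁ → 0` for every nonnegative `x ∈ ℓ¹`. -/
theorem stmt0 (r : ℕ → ℝ) (hr : ∀ i, 0 ≤ r i) (hrs : Summable r)
    (hlt : (∑' i, r i) < 1)
    (x : ℕ → ℝ) (hx : ∀ i, 0 ≤ x i) (hxs : Summable x) :
    Filter.Tendsto (fun n => ∑' i, |(renewalOp r)^[n] x i|)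
      Filter.atTop (nhds 0) := by
  set ρ : ℝ := ∑' i, r i with hρ
  have hρ0 : 0 ≤ ρ := tsum_nonneg hr
  set y : ℕ → ℕ → ℝ := fun n => (renewalOp r)^[n] x with hy
  have hy0 : y 0 = x := rfl
  have hysucc : ∀ n i, y (n + 1) i = r i * y n 0 + y n (i + 1) := by
    intro n i
    have : y (n + 1) = renewalOp r (y n) := Function.iterate_succ_apply' _ _ _
    rw [this]; rfl
  -- nonnegativity and summability of iterates
  have hbasic : ∀ n, (∀ i, 0 ≤ y n i) ∧ Summable (y n) := by
    intro n
    induction n with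
    | zero => exact ⟨hx, hxs⟩
    | succ n ih =>
      obtain ⟨hpos, hsum⟩ := ih
      constructor
      · intro i
        rw [hysucc]
        exact add_nonneg (mul_nonneg (hr i) (hpos 0)) (hpos (i + 1))
      · have h1 : Summable (fun i => r i * y n 0) := hrs.mul_right _
        have h2 : Summable (fun i => y n (i + 1)) :=
          (summable_nat_add_iff 1).mpr hsum
        have := h1.add h2
        apply this.congr
        intro i
        rw [hysucc]
  have hpos : ∀ n i, 0 ≤ y n i := fun n => (hbasic n).1
  have hsum : ∀ n, Summable (y n) := fun n => (hbasic n).2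
  set a : ℕ → ℝ := fun n => y n 0 with ha
  set N : ℕ → ℝ := fun n => ∑' i, y n i with hN
  have hNpos : ∀ n, 0 ≤ N n := fun n => tsum_nonneg (hpos n)
  -- norm recursion
  have hNrec : ∀ n, N (n + 1) = N n - (1 - ρ) * a n := by
    intro n
    have h1 : Summable (fun i => r i * y n 0) := hrs.mul_right _
    have h2 : Summable (fun i => y n (i + 1)) := (summable_nat_add_iff 1).mpr (hsum n)
    have e1 : N (n + 1) = ∑' i, (r i * y n 0 + y n (i + 1)) :=
      tsum_congr fun i => hysucc n i
    rw [e1, Summable.tsum_add h1 h2, tsum_mul_right]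
    have := Summable.tsum_eq_zero_add (hsum n)
    have e2 : ∑' i, y n (i + 1) = N n - y n 0 := by
      rw [hN]; simp only []; rw [this]; ring
    rw [e2]; ring
  -- partial sum formula
  have hNsum : ∀ n, N n = N 0 - (1 - ρ) * ∑ k ∈ Finset.range n, a k := by
    intro n
    induction n with
    | zero => simp
    | succ n ih => rw [hNrec n, ih, Finset.sum_range_succ]; ring
  -- summability of a
  have hanneg : ∀ n, 0 ≤ a n := fun n => hpos n 0
  have haS : Summable a := by
    apply summable_of_sum_range_le (c := N 0 / (1 - ρ)) hanneg
    intro n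
    rw [le_div_iff₀ (by linarith)]
    have := hNpos n
    rw [hNsum n] at this
    linarith [this]
  -- coordinate formula
  have hcoord : ∀ n i, y n i = x (n + i) + ∑ k ∈ Finset.range n, r (i + (n - 1 - k)) * a k := by
    intro n
    induction n with
    | zero => intro i; simp [hy0]
    | succ n ih =>
      intro i
      rw [hysucc, ih (i + 1), Finset.sum_range_succ]
      have e1 : r (i + (n + 1 - 1 - n)) = r i := by norm_num
      have e2 : ∑ k ∈ Finset.range n, r (i + (n + 1 - 1 - k)) * a k
          = ∑ k ∈ Finset.range n, r (i + 1 + (n - 1 - k)) * a k := by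
        apply Finset.sum_congr rfl
        intro k hk
        have hk' := Finset.mem_range.mp hk
        congr 2
        omega
      rw [e1, e2]
      have e3 : n + (i + 1) = n + 1 + i := by omega
      rw [e3]; ring
  have haform : ∀ n, a n = x n + ∑ k ∈ Finset.range n, r (n - 1 - k) * a k := by
    intro n
    have := hcoord n 0
    simpa using this
  -- the convolution part
  set h : ℕ → ℝ := fun n => ∑ k ∈ Finset.range n, r (n - 1 - k) * a k with hh
  have hhsum : Summable h := by
    have : h = fun n => a n - x n := by
      funext n; rw [hh]; simp only []; rw [haform n]; ring
    rw [this]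
    exact haS.sub hxs
  have hnorm_a : Summable (fun n => ‖a n‖) := by
    apply haS.congr; intro n; rw [Real.norm_eq_abs, abs_of_nonneg (hanneg n)]
  have hnorm_r : Summable (fun n => ‖r n‖) := by
    apply hrs.congr; intro n; rw [Real.norm_eq_abs, abs_of_nonneg (hr n)]
  have hconv : ∑' n, h n = (∑' n, a n) * ρ := by
    have hcal : ((∑' n, a n) * ∑' n, r n)
        = ∑' n, ∑ k ∈ Finset.range (n + 1), a k * r (n - k) :=
      tsum_mul_tsum_eq_tsum_sum_range_of_summable_norm hnorm_a.of_norm.norm hnorm_r.of_norm.norm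
    have e : ∀ n, h (n + 1) = ∑ k ∈ Finset.range (n + 1), a k * r (n - k) := by
      intro n
      rw [hh]
      apply Finset.sum_congr rfl
      intro k hk
      have hk' := Finset.mem_range.mp hk
      rw [mul_comm]
      norm_num
    calc ∑' n, h n = h 0 + ∑' n, h (n + 1) := Summable.tsum_eq_zero_add hhsum
      _ = ∑' n, ∑ k ∈ Finset.range (n + 1), a k * r (n - k) := by
          have h0 : h 0 = 0 := by simp [hh]
          rw [h0, zero_add, tsum_congr e]
      _ = (∑' n, a n) * ρ := by rw [← hcal, hρ]
  -- A (1 - ρ) = N 0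
  have hA : (∑' n, a n) * (1 - ρ) = N 0 := by
    have e : ∑' n, a n = ∑' n, x n + ∑' n, h n := by
      rw [← Summable.tsum_add hxs hhsum]
      exact tsum_congr haform
    have eN0 : N 0 = ∑' n, x n := by simp [hN, hy0]
    rw [hconv] at e
    rw [eN0]
    linarith [e]
  -- conclude
  have habs : (fun n => ∑' i, |(renewalOp r)^[n] x i|) = N := by
    funext n
    exact tsum_congr fun i => abs_of_nonneg (hpos n i)
  rw [habs]
  have hTend : Filter.Tendsto (fun n => ∑ k ∈ Finset.range n, a k)
      Filter.atTop (nhds (∑' n, a n)) := haS.hasSum.tendsto_sum_nat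
  have : Filter.Tendsto (fun n => N 0 - (1 - ρ) * ∑ k ∈ Finset.range n, a k)
      Filter.atTop (nhds (N 0 - (1 - ρ) * ∑' n, a n)) :=
    (Filter.Tendsto.const_mul _ hTend).const_sub _
  have hlim : N 0 - (1 - ρ) * ∑' n, a n = 0 := by linarith [hA]
  rw [hlim] at this
  apply this.congr
  intro n
  rw [← hNsum n]
end

section
/- Let $(r'_i)_{i\ge 1}$ be a sequence of nonnegative reals with $1 < \sum_{i\ge 1} r'_i < \infty$, and let $R' : \ell^1 \to \ell^1$ be defined by $(R'x)_i = r'_i x_1 + x_{i+1}$. Then for every nonnegative nonzero $x \in \ell^1$, $\|(R')^n x\|_1 \to \infty$ as $n \to \infty$. -/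
lemma renewal_nonneg (r x : ℕ → ℝ) (hr : ∀ i, 0 ≤ r i) (hx : ∀ i, 0 ≤ x i) :
    ∀ n i, 0 ≤ (renewalOp r)^[n] x i := by
  intro n
  induction n with
  | zero => exact hx
  | succ n ih =>
    intro i
    rw [Function.iterate_succ_apply']
    exact add_nonneg (mul_nonneg (hr i) (ih 0)) (ih (i + 1))

lemma renewal_summable (r x : ℕ → ℝ) (hrs : Summable r) (hxs : Summable x) :
    ∀ n, Summable ((renewalOp r)^[n] x) := by
  intro n
  induction n with
  | zero => exact hxs
  | succ n ih =>
    rw [Function.iterate_succ_apply']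
    exact (hrs.mul_right _).add ((summable_nat_add_iff 1).2 ih)

lemma renewal_formula (r x : ℕ → ℝ) :
    ∀ n i, (renewalOp r)^[n] x i
      = x (i + n) + ∑ j ∈ Finset.range n, r (i + j) * (renewalOp r)^[n - 1 - j] x 0 := by
  intro n
  induction n with
  | zero => simp
  | succ n ih =>
    intro i
    rw [Function.iterate_succ_apply']
    show r i * _ + (renewalOp r)^[n] x (i + 1) = _
    rw [ih (i + 1), Finset.sum_range_succ']
    have h1 : ∀ j ∈ Finset.range n,
        r (i + (j + 1)) * (renewalOp r)^[n + 1 - 1 - (j + 1)] x 0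
          = r (i + 1 + j) * (renewalOp r)^[n - 1 - j] x 0 := by
      intro j hj
      rw [show i + (j + 1) = i + 1 + j by ring, show n + 1 - 1 - (j + 1) = n - 1 - j by omega]
    rw [Finset.sum_congr rfl h1]
    have : i + 1 + n = i + (n + 1) := by ring
    rw [this]
    simp
    ring

lemma tsum_renewal_succ (r x : ℕ → ℝ) (hr : ∀ i, 0 ≤ r i) (hx : ∀ i, 0 ≤ x i)
    (hrs : Summable r) (hxs : Summable x) (n : ℕ) :
    ∑' i, (renewalOp r)^[n + 1] x i
      = ∑' i, (renewalOp r)^[n] x i + ((∑' i, r i) - 1) * (renewalOp r)^[n] x 0 := by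
  set y := (renewalOp r)^[n] x with hy
  have hys : Summable y := renewal_summable r x hrs hxs n
  have h1 : ∑' i, (renewalOp r)^[n + 1] x i = ∑' i, (r i * y 0 + y (i + 1)) := by
    rw [Function.iterate_succ_apply']; rfl
  have h2 : Summable fun i => r i * y 0 := hrs.mul_right _
  have h3 : Summable fun i => y (i + 1) := (summable_nat_add_iff 1).2 hys
  rw [h1, Summable.tsum_add h2 h3, tsum_mul_right]
  have h4 : ∑' i, y i = y 0 + ∑' i, y (i + 1) := Summable.tsum_eq_zero_add hys
  linarith [h4]

/-- If `1 < ∑ r'_i < ∞`, then `‖(R')^n x‖₁ → ∞` for every nonnegative nonzero `x ∈ ℓ¹`. -/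
theorem stmt1 (r : ℕ → ℝ) (hr : ∀ i, 0 ≤ r i) (hrs : Summable r)
    (hgt : 1 < ∑' i, r i)
    (x : ℕ → ℝ) (hx : ∀ i, 0 ≤ x i) (hxs : Summable x) (hxne : x ≠ 0) :
    Filter.Tendsto (fun n => ∑' i, |(renewalOp r)^[n] x i|)
      Filter.atTop Filter.atTop := by
  set a : ℕ → ℝ := fun n => (renewalOp r)^[n] x 0 with ha
  have ha0 : ∀ n, 0 ≤ a n := fun n => renewal_nonneg r x hr hx n 0
  -- positivity of ∑ x
  obtain ⟨i0, hi0⟩ := Function.ne_iff.1 hxne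
  have hxpos : 0 < ∑' i, x i :=
    lt_of_lt_of_le (lt_of_le_of_ne (hx i0) (Ne.symm hi0)) (Summable.le_tsum hxs i0 fun j _ => hx j)
  -- renewal recursion for a
  have hrec : ∀ n, a n = x n + ∑ j ∈ Finset.range n, r j * a (n - 1 - j) := by
    intro n
    have := renewal_formula r x n 0
    simpa using this
  -- a is not summable
  have hnot : ¬ Summable a := by
    intro hS
    have hrabs : Summable fun i => ‖r i‖ := by
      simpa [Real.norm_eq_abs, abs_of_nonneg (hr _)] using hrs
    have haabs : Summable fun i => ‖a i‖ := by
      simpa [Real.norm_eq_abs, abs_of_nonneg (ha0 _)] using hS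
    have hc : Summable fun n => ∑ kl ∈ Finset.HasAntidiagonal.antidiagonal n, r kl.1 * a kl.2 :=
      (summable_norm_sum_mul_antidiagonal_of_summable_norm hrabs haabs).of_norm
    have hcv : (∑' i, r i) * (∑' i, a i)
        = ∑' n, ∑ kl ∈ Finset.HasAntidiagonal.antidiagonal n, r kl.1 * a kl.2 :=
      tsum_mul_tsum_eq_tsum_sum_antidiagonal_of_summable_norm hrabs haabs
    have hx' : Summable fun n => x (n + 1) := (summable_nat_add_iff 1).2 hxs
    have h5 : ∀ n : ℕ, a (n + 1)
        = x (n + 1) + ∑ kl ∈ Finset.HasAntidiagonal.antidiagonal n, r kl.1 * a kl.2 := by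
      intro n
      rw [hrec (n + 1), Finset.Nat.sum_antidiagonal_eq_sum_range_succ_mk]
      exact congrArg _ (Finset.sum_congr rfl fun j hj => by
        rw [show n + 1 - 1 - j = (j, n - j).2 from by simp])
    have h4 : ∑' n, a n = a 0 + ∑' n, a (n + 1) := Summable.tsum_eq_zero_add hS
    have h6 : ∑' n, a (n + 1)
        = ∑' n, x (n + 1) + ∑' n, ∑ kl ∈ Finset.HasAntidiagonal.antidiagonal n, r kl.1 * a kl.2 := by
      rw [tsum_congr h5, Summable.tsum_add hx' hc]
    have h7 : ∑' n, x n = x 0 + ∑' n, x (n + 1) := Summable.tsum_eq_zero_add hxs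
    have ha00 : a 0 = x 0 := by simp [ha]
    have key : ∑' n, a n = ∑' n, x n + (∑' i, r i) * (∑' i, a i) := by
      linarith [h4, h6, h7, hcv, ha00]
    have hS0 : 0 ≤ ∑' n, a n := tsum_nonneg ha0
    nlinarith [mul_le_mul_of_nonneg_right hgt.le hS0]
  have hpartial : Filter.Tendsto (fun n => ∑ m ∈ Finset.range n, a m) Filter.atTop Filter.atTop :=
    (not_summable_iff_tendsto_nat_atTop_of_nonneg ha0).1 hnot
  -- formula for the norm
  have hN : ∀ n, ∑' i, |(renewalOp r)^[n] x i|
      = ∑' i, x i + ((∑' i, r i) - 1) * ∑ m ∈ Finset.range n, a m := by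
    intro n
    have habs : ∀ n, (∑' i, |(renewalOp r)^[n] x i|) = ∑' i, (renewalOp r)^[n] x i :=
      fun n => tsum_congr fun i => abs_of_nonneg (renewal_nonneg r x hr hx n i)
    rw [habs]
    induction n with
    | zero => simp
    | succ n ih =>
      rw [tsum_renewal_succ r x hr hx hrs hxs n, ih, Finset.sum_range_succ]
      ring
  simp only [hN]
  exact Filter.tendsto_atTop_add_const_left _ _
    (Filter.Tendsto.const_mul_atTop (by linarith) hpartial)
end

section
/- Let $(r_n)_{n\ge 1}$ be nonnegative integers with $\sum_{n\ge 1} r_n \lambda^{-n} = 1$ for some $\lambda > 1$ and $S = \sum_{n\ge 1} n\lambda^{-n} r_n < \infty$. Define $w_n = S^{-1}\sum_{k \ge n} \lambda^{-k} r_k$ and $p_n = (S \lambda^n w_n)^{-1}$ for $n$ with $r_n > 0$. Then the entropy-type sum $-\sum_{n\ge 1}\bigl[(w_n - w_{n+1})\log\frac{\lambda^{-n}}{S w_n} + w_{n+1}\log w_{n+1} - w_{n+1}\log w_n\bigr]$ equals $\log \lambda$. -/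
/-- `w n = S⁻¹ ∑_{k ≥ n} λ⁻ᵏ r_k`. -/
noncomputable def wseq (lam S : ℝ) (r : ℕ → ℝ) (n : ℕ) : ℝ :=
  S⁻¹ * ∑' k : ℕ, lam⁻¹ ^ (n + k) * r (n + k)

/-- The entropy computation for the Markov measure on the renewal shift:
`-∑_{n≥1} [(w_n - w_{n+1}) log(λ⁻ⁿ/(S w_n)) + w_{n+1} log w_{n+1} - w_{n+1} log w_n]
  = log λ`. -/
theorem stmt5 (r : ℕ → ℕ) (lam S : ℝ) (hr0 : r 0 = 0) (hlam : 1 < lam)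
    (hsum : Summable (fun n : ℕ => lam⁻¹ ^ n * (r n : ℝ)))
    (h1 : ∑' n : ℕ, (r n : ℝ) * lam⁻¹ ^ n = 1)
    (hS : Summable (fun n : ℕ => (n : ℝ) * lam⁻¹ ^ n * (r n : ℝ)))
    (hSdef : S = ∑' n : ℕ, (n : ℝ) * lam⁻¹ ^ n * (r n : ℝ))
    (hent : Summable (fun n : ℕ =>
      (wseq lam S (fun k => (r k : ℝ)) (n + 1) - wseq lam S (fun k => (r k : ℝ)) (n + 2)) *
          Real.log (lam⁻¹ ^ (n + 1) / (S * wseq lam S (fun k => (r k : ℝ)) (n + 1)))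
        + wseq lam S (fun k => (r k : ℝ)) (n + 2) *
            Real.log (wseq lam S (fun k => (r k : ℝ)) (n + 2))
        - wseq lam S (fun k => (r k : ℝ)) (n + 2) *
            Real.log (wseq lam S (fun k => (r k : ℝ)) (n + 1)))) :
    -(∑' n : ℕ,
      ((wseq lam S (fun k => (r k : ℝ)) (n + 1) - wseq lam S (fun k => (r k : ℝ)) (n + 2)) *
          Real.log (lam⁻¹ ^ (n + 1) / (S * wseq lam S (fun k => (r k : ℝ)) (n + 1)))
        + wseq lam S (fun k => (r k : ℝ)) (n + 2) *
            Real.log (wseq lam S (fun k => (r k : ℝ)) (n + 2))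
        - wseq lam S (fun k => (r k : ℝ)) (n + 2) *
            Real.log (wseq lam S (fun k => (r k : ℝ)) (n + 1))))
      = Real.log lam := by
  classical
  set r' : ℕ → ℝ := fun k => (r k : ℝ) with hr'
  set w : ℕ → ℝ := wseq lam S r' with hwdef
  have hlam0 : (0:ℝ) < lam := lt_trans one_pos hlam
  have hli : (0:ℝ) < lam⁻¹ := inv_pos.2 hlam0
  have hrn : ∀ n, 0 ≤ r' n := fun n => Nat.cast_nonneg _
  set f : ℕ → ℝ := fun k => lam⁻¹ ^ k * r' k with hfdef
  have hf0 : ∀ k, 0 ≤ f k := fun k => mul_nonneg (pow_nonneg hli.le _) (hrn k)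
  have hfs : Summable f := hsum
  have htail : ∀ n : ℕ, Summable (fun k => f (n + k)) := by
    intro n
    have := (summable_nat_add_iff (f := f) n).2 hfs
    exact this.congr (fun k => by rw [add_comm])
  set t : ℕ → ℝ := fun n => ∑' k, f (n + k) with htdef
  have hwt : ∀ n, w n = S⁻¹ * t n := fun n => rfl
  have htrec : ∀ n, t n = f n + t (n + 1) := by
    intro n
    have h := Summable.tsum_eq_zero_add (htail n)
    calc t n = f (n + 0) + ∑' k, f (n + (k + 1)) := h
      _ = f n + t (n + 1) := by
          rw [add_zero]
          congr 1
          exact tsum_congr fun k => congrArg f (by omega)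
  have hfe0 : f 0 = 0 := by simp [hfdef, hr', hr0]
  have ht0 : t 0 = 1 := by
    have : t 0 = ∑' k, f k := tsum_congr fun k => congrArg f (by omega)
    rw [this]
    rw [← h1]
    exact tsum_congr fun k => mul_comm _ _
  have ht1 : t 1 = 1 := by
    have h := htrec 0
    rw [ht0, hfe0, zero_add] at h
    exact h.symm
  have htn : ∀ n, 0 ≤ t n := fun n => tsum_nonneg (fun k => hf0 _)
  -- S ≥ 1
  have hsum1 : Summable (fun n : ℕ => r' n * lam⁻¹ ^ n) :=
    hfs.congr (fun n => mul_comm _ _)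
  have hS1 : 1 ≤ S := by
    rw [hSdef, ← h1]
    refine Summable.tsum_le_tsum (fun n => ?_) hsum1 hS
    rcases Nat.eq_zero_or_pos n with h | h
    · simp [h, hr', hr0]
    · have h1n : (1:ℝ) ≤ (n:ℝ) := by exact_mod_cast h
      have : 0 ≤ lam⁻¹ ^ n * r' n := hf0 n
      nlinarith
  have hS0 : (0:ℝ) < S := lt_of_lt_of_le one_pos hS1
  have hSne : S ≠ 0 := ne_of_gt hS0
  have hSi0 : (0:ℝ) < S⁻¹ := inv_pos.2 hS0
  have hwnn : ∀ n, 0 ≤ w n := fun n => mul_nonneg hSi0.le (htn n)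
  have hwd : ∀ n, w (n + 1) - w (n + 2) = S⁻¹ * f (n + 1) := by
    intro n
    have h := htrec (n + 1)
    have h2 : t (n + 1 + 1) = t (n + 2) := by norm_num
    rw [h2] at h
    rw [hwt, hwt, h]; ring
  have hw1 : w 1 = S⁻¹ := by rw [hwt, ht1, mul_one]
  have hkey : ∀ n, w (n + 1) = 0 → f (n + 1) = 0 ∧ w (n + 2) = 0 := by
    intro n h
    have ht10 : t (n + 1) = 0 := by
      have := hwt (n + 1)
      rw [h] at this
      have := this.symm
      rcases mul_eq_zero.1 this with h' | h'
      · exact absurd h' (ne_of_gt hSi0)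
      · exact h'
    have h3 := htrec (n + 1)
    have h2 : t (n + 1 + 1) = t (n + 2) := by norm_num
    rw [h2, ht10] at h3
    have hf1 := hf0 (n + 1)
    have ht2 := htn (n + 2)
    constructor
    · linarith
    · rw [hwt]
      have : t (n + 2) = 0 := by linarith
      rw [this, mul_zero]
  -- pointwise identity
  have hpt : ∀ n : ℕ,
      (w (n + 1) - w (n + 2)) * Real.log (lam⁻¹ ^ (n + 1) / (S * w (n + 1)))
        + w (n + 2) * Real.log (w (n + 2)) - w (n + 2) * Real.log (w (n + 1))
      = (-Real.log lam) * (((n:ℝ) + 1) * (S⁻¹ * f (n + 1)))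
        + (-Real.log S) * (S⁻¹ * f (n + 1))
        + (w (n + 1 + 1) * Real.log (w (n + 1 + 1)) - w (n + 0 + 1) * Real.log (w (n + 0 + 1))) := by
    intro n
    have hidx : n + 1 + 1 = n + 2 := by norm_num
    have hidx0 : n + 0 + 1 = n + 1 := by norm_num
    rw [hidx, hidx0]
    rcases (hwnn (n + 1)).eq_or_lt with h | hpos
    · obtain ⟨hfz, hw2z⟩ := hkey n (h.symm)
      rw [← h, hw2z, hfz]
      simp
    · have hw2 := hwd n
      have hlog : Real.log (lam⁻¹ ^ (n + 1) / (S * w (n + 1)))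
          = -(((n:ℝ) + 1) * Real.log lam) - Real.log S - Real.log (w (n + 1)) := by
        rw [Real.log_div (by positivity) (by positivity),
          Real.log_mul hSne (ne_of_gt hpos), Real.log_pow, Real.log_inv]
        push_cast; ring
      rw [hlog, ← hw2]
      ring
  -- partial sums
  set F : ℕ → ℝ := fun n =>
      (w (n + 1) - w (n + 2)) * Real.log (lam⁻¹ ^ (n + 1) / (S * w (n + 1)))
        + w (n + 2) * Real.log (w (n + 2)) - w (n + 2) * Real.log (w (n + 1)) with hFdef
  have hpartial : ∀ N : ℕ, ∑ n ∈ Finset.range N, F n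
      = (-Real.log lam) * ∑ n ∈ Finset.range N, ((n:ℝ) + 1) * (S⁻¹ * f (n + 1))
        + (-Real.log S) * ∑ n ∈ Finset.range N, (S⁻¹ * f (n + 1))
        + (w (N + 1) * Real.log (w (N + 1)) - w 1 * Real.log (w 1)) := by
    intro N
    rw [Finset.sum_congr rfl (fun n _ => hpt n)]
    rw [Finset.sum_add_distrib, Finset.sum_add_distrib, ← Finset.mul_sum, ← Finset.mul_sum,
      Finset.sum_range_sub (fun m => w (m + 1) * Real.log (w (m + 1)))]
  -- limit of first piece
  have hA : Filter.Tendsto (fun N => ∑ n ∈ Finset.range N, ((n:ℝ) + 1) * (S⁻¹ * f (n + 1)))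
      Filter.atTop (nhds 1) := by
    have hhs : HasSum (fun n : ℕ => S⁻¹ * ((n:ℝ) * lam⁻¹ ^ n * r' n)) 1 := by
      have := (hS.hasSum).mul_left S⁻¹
      rw [← hSdef, inv_mul_cancel₀ hSne] at this
      exact this
    have h2 := hhs.tendsto_sum_nat.comp (Filter.tendsto_add_atTop_nat 1)
    refine h2.congr (fun N => ?_)
    simp only [Function.comp]
    rw [Finset.sum_range_succ']
    have h0 : S⁻¹ * ((0:ℕ) * lam⁻¹ ^ 0 * r' 0) = 0 := by simp
    rw [h0, add_zero]
    refine Finset.sum_congr rfl (fun n _ => ?_)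
    simp only [hfdef]
    push_cast
    ring
  -- limit of second piece
  have hB : Filter.Tendsto (fun N => ∑ n ∈ Finset.range N, (S⁻¹ * f (n + 1)))
      Filter.atTop (nhds S⁻¹) := by
    have hhs1 : HasSum (fun n : ℕ => r' n * lam⁻¹ ^ n) 1 := h1 ▸ hsum1.hasSum
    have hhs : HasSum (fun n : ℕ => S⁻¹ * (r' n * lam⁻¹ ^ n)) S⁻¹ := by
      have := hhs1.mul_left S⁻¹
      rwa [mul_one] at this
    have h2 := hhs.tendsto_sum_nat.comp (Filter.tendsto_add_atTop_nat 1)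
    refine h2.congr (fun N => ?_)
    simp only [Function.comp]
    rw [Finset.sum_range_succ']
    have h0 : S⁻¹ * (r' 0 * lam⁻¹ ^ 0) = 0 := by simp [hr', hr0]
    rw [h0, add_zero]
    refine Finset.sum_congr rfl (fun n _ => ?_)
    simp only [hfdef]
    ring
  -- limit of telescoped piece
  have hw0 : Filter.Tendsto w Filter.atTop (nhds 0) := by
    have h2 : Filter.Tendsto (fun i => ∑' k, f (k + i)) Filter.atTop (nhds 0) :=
      tendsto_sum_nat_add f
    have h3 : Filter.Tendsto t Filter.atTop (nhds 0) := by
      refine h2.congr (fun i => ?_)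
      exact tsum_congr fun k => congrArg f (by omega)
    have h4 := h3.const_mul S⁻¹
    rw [mul_zero] at h4
    exact h4.congr (fun n => (hwt n).symm)
  have hC : Filter.Tendsto (fun N => w (N + 1) * Real.log (w (N + 1)))
      Filter.atTop (nhds 0) := by
    have hcont := Real.continuous_mul_log.tendsto 0
    have h0 : (0:ℝ) * Real.log 0 = 0 := by simp
    rw [h0] at hcont
    exact hcont.comp (hw0.comp (Filter.tendsto_add_atTop_nat 1))
  -- assemble
  have hTend : Filter.Tendsto (fun N => ∑ n ∈ Finset.range N, F n)
      Filter.atTop (nhds (-Real.log lam)) := by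
    have h2 : Filter.Tendsto (fun N =>
        (-Real.log lam) * ∑ n ∈ Finset.range N, ((n:ℝ) + 1) * (S⁻¹ * f (n + 1))
        + (-Real.log S) * ∑ n ∈ Finset.range N, (S⁻¹ * f (n + 1))
        + (w (N + 1) * Real.log (w (N + 1)) - w 1 * Real.log (w 1)))
        Filter.atTop
        (nhds ((-Real.log lam) * 1 + (-Real.log S) * S⁻¹
          + (0 - w 1 * Real.log (w 1)))) := by
      exact ((hA.const_mul _).add (hB.const_mul _)).add
        (hC.sub tendsto_const_nhds)
    have hval : (-Real.log lam) * 1 + (-Real.log S) * S⁻¹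
        + (0 - w 1 * Real.log (w 1)) = -Real.log lam := by
      rw [hw1, Real.log_inv]
      ring
    rw [hval] at h2
    exact Filter.Tendsto.congr (fun N => (hpartial N).symm) h2
  have hentF : Summable F := hent
  have := tendsto_nhds_unique hentF.hasSum.tendsto_sum_nat hTend
  rw [this, neg_neg]
end

section
/- Let $(r_n)_{n\ge 1}$ be nonnegative integers and $a_n = \sum_{k\ge 1}\sum_{n_1+\cdots+n_k=n} r_{n_1}\cdots r_{n_k}$ (with $a_0 = 1$) the associated renewal sequence. Suppose there exist $h > 0$ and $C \ge 1$ such that $C^{-1}e^{hn} \le a_n \le Ce^{hn}$ for all sufficiently large $n$. Then $\sum_{n\ge 1} r_n e^{-hn} = 1$. -/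
open scoped ENNReal

/-- The renewal sequence `a_n = ∑_{k ≥ 1} ∑_{n₁ + ⋯ + n_k = n} r_{n₁} ⋯ r_{n_k}`
(ordered compositions of `n` into positive parts; `a₀ = 1` via the empty list). -/
noncomputable def renewalCount (r : ℕ → ℕ) (n : ℕ) : ℝ :=
  ∑' l : List ℕ,
    if l.sum = n ∧ 0 ∉ l then (l.map (fun m => (r m : ℝ))).prod else 0

namespace Stmt16Aux

variable (r : ℕ → ℕ) (h : ℝ)

/-- weight of a single part -/
noncomputable def xw (a : ℕ) : ℝ≥0∞ :=
  (r a : ℝ≥0∞) * ENNReal.ofReal (Real.exp (-h * a))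

lemma xw_ne_top (a : ℕ) : xw r h a ≠ ⊤ :=
  ENNReal.mul_ne_top (ENNReal.natCast_ne_top _) ENNReal.ofReal_ne_top

/-- weight of a list -/
noncomputable def lw (l : List ℕ) : ℝ≥0∞ := (l.map (xw r h)).prod

@[simp] lemma lw_nil : lw r h [] = 1 := rfl

@[simp] lemma lw_cons (a : ℕ) (l : List ℕ) :
    lw r h (a :: l) = xw r h a * lw r h l := by simp [lw]

lemma prodCast {M : Type*} [CommSemiring M] (l : List ℕ) :
    (l.map (fun m => (r m : M))).prod = (((l.map r).prod : ℕ) : M) := by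
  rw [Nat.cast_list_prod, List.map_map]
  rfl

lemma lw_eq (l : List ℕ) :
    lw r h l = (((l.map r).prod : ℕ) : ℝ≥0∞) *
      ENNReal.ofReal (Real.exp (-h * (l.sum : ℝ))) := by
  induction l with
  | nil => simp
  | cons a l ih =>
    rw [lw_cons, ih, xw]
    rw [show ((a :: l).sum : ℝ) = (a : ℝ) + (l.sum : ℝ) by push_cast [List.sum_cons]; ring]
    rw [show -h * ((a : ℝ) + (l.sum : ℝ)) = (-h * a) + (-h * l.sum) by ring, Real.exp_add,
      ENNReal.ofReal_mul (Real.exp_nonneg _)]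
    push_cast [List.map_cons, List.prod_cons]
    ring

/-- ENNReal version of renewalCount -/
noncomputable def A (n : ℕ) : ℝ≥0∞ :=
  ∑' l : List ℕ,
    if l.sum = n ∧ 0 ∉ l then (l.map (fun m => (r m : ℝ≥0∞))).prod else 0

lemma renewal_toReal (n : ℕ) : renewalCount r n = (A r n).toReal := by
  rw [A, ENNReal.tsum_toReal_eq, renewalCount]
  · apply tsum_congr
    intro l
    split_ifs with hl
    · rw [prodCast, prodCast]; rfl
    · simp
  · intro l
    split_ifs with hl
    · rw [prodCast]; exact ENNReal.natCast_ne_top _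
    · simp

/-- conjugated renewal sequence -/
noncomputable def B (n : ℕ) : ℝ≥0∞ :=
  ∑' l : List ℕ, if l.sum = n ∧ 0 ∉ l then lw r h l else 0

lemma B_eq (n : ℕ) :
    B r h n = A r n * ENNReal.ofReal (Real.exp (-h * (n : ℝ))) := by
  rw [B, A, ← ENNReal.tsum_mul_right]
  apply tsum_congr
  intro l
  split_ifs with hl
  · rw [lw_eq, prodCast, hl.1]
  · simp

/-- total weight of head -/
noncomputable def sw : ℝ≥0∞ := ∑' a : ℕ, xw r h (a + 1)

lemma cons_inj : Function.Injective (fun p : ℕ × List ℕ => p.1 :: p.2) := by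
  rintro ⟨a, l⟩ ⟨b, m⟩ hp
  simp only [List.cons.injEq] at hp
  simp [hp.1, hp.2]

lemma sw_eq : sw r h = ∑' a : ℕ, (if a ≠ 0 then xw r h a else 0) := by
  rw [sw]
  have := Function.Injective.tsum_eq (g := fun n : ℕ => n + 1)
    (f := fun a : ℕ => if a ≠ 0 then xw r h a else 0)
    (fun x y hxy => by simpa using hxy)
    (by
      intro a ha
      simp only [Function.mem_support, ne_eq, ite_eq_right_iff, not_forall] at ha
      refine ⟨a - 1, ?_⟩
      have h1 : a ≠ 0 := ha.1
      show a - 1 + 1 = a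
      omega)
  rw [← this]
  apply tsum_congr
  intro a
  simp

/-- weight of lists of length k with positive entries -/
noncomputable def W (k : ℕ) : ℝ≥0∞ :=
  ∑' l : List ℕ, if l.length = k ∧ 0 ∉ l then lw r h l else 0

lemma W_zero : W r h 0 = 1 := by
  rw [W]
  rw [show (fun l : List ℕ => if l.length = 0 ∧ 0 ∉ l then lw r h l else 0)
      = fun l : List ℕ => if l = [] then 1 else 0 by
    funext l
    rcases l with _ | ⟨a, l⟩ <;> simp]
  exact tsum_ite_eq [] 1

lemma W_succ (k : ℕ) : W r h (k + 1) = sw r h * W r h k := by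
  have hsupp : Function.support
      (fun l : List ℕ => if l.length = k + 1 ∧ 0 ∉ l then lw r h l else 0)
      ⊆ Set.range (fun p : ℕ × List ℕ => p.1 :: p.2) := by
    intro l hl
    simp only [Function.mem_support, ne_eq, ite_eq_right_iff, not_forall] at hl
    obtain ⟨⟨hlen, -⟩, -⟩ := hl
    rcases l with _ | ⟨a, l⟩
    · simp at hlen
    · exact ⟨(a, l), rfl⟩
  rw [W, ← Function.Injective.tsum_eq (cons_inj) hsupp]
  have hterm : ∀ p : ℕ × List ℕ,
      (if (p.1 :: p.2).length = k + 1 ∧ 0 ∉ (p.1 :: p.2) then lw r h (p.1 :: p.2) else 0)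
      = (if p.1 ≠ 0 then xw r h p.1 else 0) *
        (if p.2.length = k ∧ 0 ∉ p.2 then lw r h p.2 else 0) := by
    rintro ⟨a, l⟩
    simp only [List.length_cons, add_left_inj, List.mem_cons, not_or, lw_cons, ne_eq]
    split_ifs <;> simp_all
  calc ∑' p : ℕ × List ℕ,
      (if (p.1 :: p.2).length = k + 1 ∧ 0 ∉ (p.1 :: p.2) then lw r h (p.1 :: p.2) else 0)
      = ∑' p : ℕ × List ℕ, (if p.1 ≠ 0 then xw r h p.1 else 0) *
        (if p.2.length = k ∧ 0 ∉ p.2 then lw r h p.2 else 0) := tsum_congr hterm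
    _ = ∑' a : ℕ, ∑' l : List ℕ, (if a ≠ 0 then xw r h a else 0) *
        (if l.length = k ∧ 0 ∉ l then lw r h l else 0) := ENNReal.tsum_prod'
    _ = ∑' a : ℕ, (if a ≠ 0 then xw r h a else 0) * W r h k := by
        apply tsum_congr; intro a; rw [ENNReal.tsum_mul_left, W]
    _ = sw r h * W r h k := by rw [ENNReal.tsum_mul_right, sw_eq]

lemma W_pow (k : ℕ) : W r h k = (sw r h) ^ k := by
  induction k with
  | zero => simpa using W_zero r h
  | succ k ih => rw [W_succ, ih, pow_succ]; ring

/-- truncated weights -/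
noncomputable def V (m k : ℕ) : ℝ≥0∞ :=
  ∑' l : List ℕ, if l.length = k ∧ 0 ∉ l ∧ (∀ a ∈ l, a ≤ m) then lw r h l else 0

noncomputable def q (m : ℕ) : ℝ≥0∞ := ∑ a ∈ Finset.Icc 1 m, xw r h a

lemma head_trunc (m : ℕ) :
    ∑' a : ℕ, (if a ≠ 0 ∧ a ≤ m then xw r h a else 0) = q r h m := by
  rw [q, tsum_eq_sum (s := Finset.Icc 1 m)
    (by intro b hb; simp only [Finset.mem_Icc] at hb; simp only [ite_eq_right_iff]
        intro hb2; omega)]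
  apply Finset.sum_congr rfl
  intro a ha
  simp only [Finset.mem_Icc] at ha
  have : a ≠ 0 ∧ a ≤ m := by omega
  simp [this]

lemma V_zero (m : ℕ) : V r h m 0 = 1 := by
  rw [V]
  rw [show (fun l : List ℕ => if l.length = 0 ∧ 0 ∉ l ∧ (∀ a ∈ l, a ≤ m) then lw r h l else 0)
      = fun l : List ℕ => if l = [] then 1 else 0 by
    funext l
    rcases l with _ | ⟨a, l⟩ <;> simp]
  exact tsum_ite_eq [] 1

lemma V_succ (m k : ℕ) : V r h m (k + 1) = q r h m * V r h m k := by
  have hsupp : Function.support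
      (fun l : List ℕ => if l.length = k + 1 ∧ 0 ∉ l ∧ (∀ a ∈ l, a ≤ m) then lw r h l else 0)
      ⊆ Set.range (fun p : ℕ × List ℕ => p.1 :: p.2) := by
    intro l hl
    simp only [Function.mem_support, ne_eq, ite_eq_right_iff, not_forall] at hl
    obtain ⟨⟨hlen, -⟩, -⟩ := hl
    rcases l with _ | ⟨a, l⟩
    · simp at hlen
    · exact ⟨(a, l), rfl⟩
  rw [V, ← Function.Injective.tsum_eq (cons_inj) hsupp]
  have hterm : ∀ p : ℕ × List ℕ,
      (if (p.1 :: p.2).length = k + 1 ∧ 0 ∉ (p.1 :: p.2) ∧ (∀ a ∈ (p.1 :: p.2), a ≤ m)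
        then lw r h (p.1 :: p.2) else 0)
      = (if p.1 ≠ 0 ∧ p.1 ≤ m then xw r h p.1 else 0) *
        (if p.2.length = k ∧ 0 ∉ p.2 ∧ (∀ a ∈ p.2, a ≤ m) then lw r h p.2 else 0) := by
    rintro ⟨a, l⟩
    by_cases ha : a = 0
    · simp [ha]
    by_cases ham : a ≤ m <;> by_cases hlk : l.length = k <;>
      by_cases h0 : (0:ℕ) ∈ l <;> by_cases hall : ∀ b ∈ l, b ≤ m <;>
      simp [ha, Ne.symm ha, ham, hlk, h0, hall]
  calc ∑' p : ℕ × List ℕ,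
      (if (p.1 :: p.2).length = k + 1 ∧ 0 ∉ (p.1 :: p.2) ∧ (∀ a ∈ (p.1 :: p.2), a ≤ m)
        then lw r h (p.1 :: p.2) else 0)
      = ∑' p : ℕ × List ℕ, (if p.1 ≠ 0 ∧ p.1 ≤ m then xw r h p.1 else 0) *
        (if p.2.length = k ∧ 0 ∉ p.2 ∧ (∀ a ∈ p.2, a ≤ m) then lw r h p.2 else 0) :=
        tsum_congr hterm
    _ = ∑' a : ℕ, ∑' l : List ℕ, (if a ≠ 0 ∧ a ≤ m then xw r h a else 0) *
        (if l.length = k ∧ 0 ∉ l ∧ (∀ b ∈ l, b ≤ m) then lw r h l else 0) := ENNReal.tsum_prod'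
    _ = ∑' a : ℕ, (if a ≠ 0 ∧ a ≤ m then xw r h a else 0) * V r h m k := by
        apply tsum_congr; intro a; rw [ENNReal.tsum_mul_left, V]
    _ = q r h m * V r h m k := by rw [ENNReal.tsum_mul_right, head_trunc]

lemma V_pow (m k : ℕ) : V r h m k = (q r h m) ^ k := by
  induction k with
  | zero => simpa using V_zero r h m
  | succ k ih => rw [V_succ, ih, pow_succ]; ring

/-- total weight -/
noncomputable def T : ℝ≥0∞ := ∑' l : List ℕ, if 0 ∉ l then lw r h l else 0

lemma T_eq_W : ∑' k : ℕ, W r h k = T r h := by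
  rw [show (fun k : ℕ => W r h k) = fun k : ℕ =>
      ∑' l : List ℕ, if k = l.length then (if 0 ∉ l then lw r h l else 0) else 0 by
    funext k
    rw [W]
    apply tsum_congr
    intro l
    by_cases hk : k = l.length <;> simp [hk, eq_comm]]
  rw [ENNReal.tsum_comm]
  apply tsum_congr
  intro l
  exact tsum_ite_eq l.length _

lemma T_eq_B : ∑' n : ℕ, B r h n = T r h := by
  rw [show (fun n : ℕ => B r h n) = fun n : ℕ =>
      ∑' l : List ℕ, if n = l.sum then (if 0 ∉ l then lw r h l else 0) else 0 by
    funext n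
    rw [B]
    apply tsum_congr
    intro l
    by_cases hn : n = l.sum <;> simp [hn, eq_comm]]
  rw [ENNReal.tsum_comm]
  apply tsum_congr
  intro l
  exact tsum_ite_eq l.sum _

lemma sum_B (s : Finset ℕ) :
    ∑ n ∈ s, B r h n = ∑' l : List ℕ, if l.sum ∈ s ∧ 0 ∉ l then lw r h l else 0 := by
  rw [show (fun n : ℕ => B r h n) = fun n : ℕ =>
      ∑' l : List ℕ, if n = l.sum then (if 0 ∉ l then lw r h l else 0) else 0 by
    funext n
    rw [B]
    apply tsum_congr
    intro l
    by_cases hn : n = l.sum <;> simp [hn, eq_comm]]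
  rw [← Summable.tsum_finsetSum (fun i _ => ENNReal.summable)]
  apply tsum_congr
  intro l
  rw [Finset.sum_ite_eq' s l.sum]
  by_cases hs : l.sum ∈ s <;> by_cases h0 : (0:ℕ) ∈ l <;> simp [hs, h0]

lemma length_le_sum : ∀ l : List ℕ, 0 ∉ l → l.length ≤ l.sum := by
  intro l
  induction l with
  | nil => simp
  | cons a l ih =>
    intro hl
    simp only [List.mem_cons, not_or] at hl
    have h1 : 1 ≤ a := by omega
    have := ih hl.2
    simp only [List.length_cons, List.sum_cons]
    omega

lemma sum_le_mul (m : ℕ) : ∀ l : List ℕ, (∀ a ∈ l, a ≤ m) → l.sum ≤ l.length * m := by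
  intro l
  induction l with
  | nil => simp
  | cons a l ih =>
    intro hl
    have h1 := hl a (by simp)
    have := ih (fun b hb => hl b (by simp [hb]))
    simp only [List.length_cons, List.sum_cons]
    nlinarith

lemma V_le_sum_B (m k : ℕ) :
    V r h m k ≤ ∑ n ∈ Finset.Icc k (k * m), B r h n := by
  rw [sum_B, V]
  apply ENNReal.tsum_le_tsum
  intro l
  split_ifs with h1 h2
  · exact le_rfl
  · have hls := length_le_sum l h1.2.1
    have hsm := sum_le_mul m l h1.2.2
    rw [h1.1] at hls hsm
    exact absurd ⟨Finset.mem_Icc.2 ⟨hls, hsm⟩, h1.2.1⟩ h2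
  · exact zero_le
  · exact zero_le

end Stmt16Aux

open Stmt16Aux

/-- Kesten-type renewal dichotomy: if `C⁻¹ e^{hn} ≤ a_n ≤ C e^{hn}` for all large
`n`, then `∑_{n ≥ 1} r_n e^{-hn} = 1` (sum taken in `[0,∞]`). -/
theorem stmt16 (r : ℕ → ℕ) (h : ℝ) (hh : 0 < h) (C : ℝ) (hC : 1 ≤ C) (n0 : ℕ)
    (hbound : ∀ n : ℕ, n0 ≤ n →
      C⁻¹ * Real.exp (h * (n : ℝ)) ≤ renewalCount r n
        ∧ renewalCount r n ≤ C * Real.exp (h * (n : ℝ))) :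
    ∑' n : ℕ, (r (n + 1) : ℝ≥0∞) *
        ENNReal.ofReal (Real.exp (-h * ((n : ℝ) + 1))) = 1 := by
  have hC0 : (0:ℝ) < C := lt_of_lt_of_le one_pos hC
  -- the goal sum is `sw r h`
  have hgoal : (∑' n : ℕ, (r (n + 1) : ℝ≥0∞) *
      ENNReal.ofReal (Real.exp (-h * ((n : ℝ) + 1)))) = sw r h := by
    rw [sw]
    apply tsum_congr
    intro n
    have hcast : (((n+1 : ℕ)) : ℝ) = (n : ℝ) + 1 := by push_cast; ring
    rw [xw, hcast]
  rw [hgoal]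
  -- bounds on B
  have key : ∀ n, n0 ≤ n → ENNReal.ofReal C⁻¹ ≤ B r h n ∧ B r h n ≤ ENNReal.ofReal C := by
    intro n hn
    obtain ⟨hlo, hhi⟩ := hbound n hn
    have hexp : (0:ℝ) < Real.exp (h * n) := Real.exp_pos _
    have hrc_pos : 0 < renewalCount r n := lt_of_lt_of_le (by positivity) hlo
    have hAne : A r n ≠ ⊤ := by
      intro htop
      rw [renewal_toReal, htop] at hrc_pos
      simp at hrc_pos
    have hA : A r n = ENNReal.ofReal (renewalCount r n) := by
      rw [renewal_toReal, ENNReal.ofReal_toReal hAne]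
    have hBn : B r h n = ENNReal.ofReal (renewalCount r n * Real.exp (-h * n)) := by
      rw [B_eq, hA, ← ENNReal.ofReal_mul hrc_pos.le]
    have hee : Real.exp (h * n) * Real.exp (-h * n) = 1 := by
      rw [← Real.exp_add, show h * (n:ℝ) + (-h * n) = 0 by ring, Real.exp_zero]
    constructor
    · rw [hBn]
      apply ENNReal.ofReal_le_ofReal
      calc C⁻¹ = (C⁻¹ * Real.exp (h*n)) * Real.exp (-h*n) := by
            rw [mul_assoc, hee, mul_one]
        _ ≤ renewalCount r n * Real.exp (-h*n) :=
            mul_le_mul_of_nonneg_right hlo (Real.exp_nonneg _)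
    · rw [hBn]
      apply ENNReal.ofReal_le_ofReal
      calc renewalCount r n * Real.exp (-h*n)
          ≤ (C * Real.exp (h*n)) * Real.exp (-h*n) :=
            mul_le_mul_of_nonneg_right hhi (Real.exp_nonneg _)
        _ = C := by rw [mul_assoc, hee, mul_one]
  rcases lt_trichotomy (sw r h) 1 with hs | hs | hs
  · -- subcritical: total mass finite, but B is bounded below, contradiction
    exfalso
    have hT : T r h ≠ ⊤ := by
      rw [← T_eq_W, tsum_congr (W_pow r h), ENNReal.tsum_geometric]
      exact ENNReal.inv_ne_top.2 (fun h0 => absurd (tsub_eq_zero_iff_le.1 h0) (not_le.2 hs))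
    have hle : ∑' n : ℕ, (if n0 ≤ n then ENNReal.ofReal C⁻¹ else 0) ≤ ∑' n : ℕ, B r h n :=
      ENNReal.tsum_le_tsum (fun n => by
        split_ifs with hn
        · exact (key n hn).1
        · exact zero_le)
    have htop : ∑' n : ℕ, (if n0 ≤ n then ENNReal.ofReal C⁻¹ else 0) = ⊤ := by
      have hrw := Function.Injective.tsum_eq (g := fun n : ℕ => n + n0)
        (f := fun n : ℕ => if n0 ≤ n then ENNReal.ofReal C⁻¹ else 0)
        (fun x y hxy => by simpa using hxy)
        (by
          intro n hn
          simp only [Function.mem_support, ne_eq, ite_eq_right_iff, not_forall] at hn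
          refine ⟨n - n0, ?_⟩
          have h1 := hn.1
          show n - n0 + n0 = n
          omega)
      rw [← hrw]
      have : ∀ c : ℕ, (if n0 ≤ (fun n : ℕ => n + n0) c then ENNReal.ofReal C⁻¹ else 0)
          = ENNReal.ofReal C⁻¹ := by
        intro c
        simp
      rw [tsum_congr this]
      exact ENNReal.tsum_const_eq_top_of_ne_zero
        ((ENNReal.ofReal_pos.2 (inv_pos.2 hC0)).ne')
    rw [htop, top_le_iff, T_eq_B] at hle
    exact hT hle
  · exact hs
  · -- supercritical: truncated geometric growth beats linear bound
    exfalso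
    -- find a finite truncation with q > 1
    have hten := ENNReal.tendsto_nat_tsum (fun a : ℕ => xw r h (a + 1))
    have hev := hten.eventually (lt_mem_nhds hs)
    obtain ⟨m, hm⟩ := hev.exists
    have hq1 : 1 < q r h m := by
      rw [q]
      calc (1:ℝ≥0∞) < ∑ i ∈ Finset.range m, xw r h (i + 1) := hm
        _ = ∑ a ∈ Finset.Icc 1 m, xw r h a := by
            rw [show Finset.Icc 1 m = Finset.Ico 1 (m+1) by rw [Finset.Ico_add_one_right_eq_Icc],
              Finset.sum_Ico_eq_sum_range]
            simp [add_comm]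
    have hqt : q r h m ≠ ⊤ := ENNReal.sum_ne_top.2 (fun a _ => xw_ne_top r h a)
    have hm1 : 1 ≤ m := by
      by_contra hm0
      have : m = 0 := by omega
      rw [this] at hq1
      simp [q] at hq1
    -- growth bound in ℝ≥0∞
    have hkey : ∀ k, n0 ≤ k → 1 ≤ k →
        (q r h m) ^ k ≤ ((k * m : ℕ) : ℝ≥0∞) * ENNReal.ofReal C := by
      intro k hk hk1
      calc (q r h m) ^ k = V r h m k := (V_pow r h m k).symm
        _ ≤ ∑ n ∈ Finset.Icc k (k * m), B r h n := V_le_sum_B r h m k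
        _ ≤ ∑ _n ∈ Finset.Icc k (k * m), ENNReal.ofReal C :=
            Finset.sum_le_sum (fun n hn =>
              (key n (le_trans hk (Finset.mem_Icc.1 hn).1)).2)
        _ = ((Finset.Icc k (k * m)).card : ℝ≥0∞) * ENNReal.ofReal C := by
            rw [Finset.sum_const, nsmul_eq_mul]
        _ ≤ ((k * m : ℕ) : ℝ≥0∞) * ENNReal.ofReal C := by
            apply mul_le_mul_left
            apply Nat.cast_le.2
            rw [Nat.card_Icc]
            have : k ≤ k * m := Nat.le_mul_of_pos_right k (by omega)
            omega
    -- transfer to ℝ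
    set q' : ℝ := (q r h m).toReal with hq'def
    have hq'1 : 1 < q' := by
      rw [hq'def, ← ENNReal.toReal_one]
      exact (ENNReal.toReal_lt_toReal ENNReal.one_ne_top hqt).2 hq1
    have hreal : ∀ k, n0 ≤ k → 1 ≤ k → q' ^ k ≤ (k : ℝ) * m * C := by
      intro k hk hk1
      have h2 := hkey k hk hk1
      rw [show q r h m = ENNReal.ofReal q' from (ENNReal.ofReal_toReal hqt).symm,
        ← ENNReal.ofReal_pow ENNReal.toReal_nonneg,
        show ((k * m : ℕ) : ℝ≥0∞) * ENNReal.ofReal C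
          = ENNReal.ofReal (((k * m : ℕ) : ℝ) * C) by
          rw [ENNReal.ofReal_mul (by positivity), ENNReal.ofReal_natCast]] at h2
      have h3 := (ENNReal.ofReal_le_ofReal_iff (by positivity)).1 h2
      calc q' ^ k ≤ ((k * m : ℕ) : ℝ) * C := h3
        _ = (k : ℝ) * m * C := by push_cast; ring
    -- contradiction with geometric growth
    set ε : ℝ := q' - 1 with hεdef
    have hε : 0 < ε := by simp [hεdef]; linarith
    obtain ⟨j0, hj0⟩ := exists_nat_gt (2 * (m : ℝ) * C / ε ^ 2)
    set j : ℕ := max j0 (max n0 1) with hjdef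
    have hjge : 2 * (m : ℝ) * C / ε ^ 2 < (j : ℝ) :=
      lt_of_lt_of_le hj0 (Nat.cast_le.2 (le_max_left _ _))
    have hjn0 : n0 ≤ j := le_trans (le_max_left _ _) (le_max_right _ _)
    have hj1 : 1 ≤ j := le_trans (le_max_right _ _) (le_max_right _ _)
    have hb := hreal (2 * j) (by omega) (by omega)
    have hq'j : (1 : ℝ) + (j : ℝ) * ε ≤ q' ^ j := by
      have := one_add_mul_le_pow (a := ε) (by linarith) j
      calc (1:ℝ) + (j:ℝ) * ε ≤ (1 + ε) ^ j := this
        _ = q' ^ j := by rw [show (1:ℝ) + ε = q' by rw [hεdef]; ring]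
    have hjε : (0:ℝ) ≤ (j : ℝ) * ε := by positivity
    have hsq : ((j : ℝ) * ε) ^ 2 ≤ q' ^ (2 * j) := by
      calc ((j : ℝ) * ε) ^ 2 ≤ (1 + (j : ℝ) * ε) ^ 2 := by nlinarith
        _ ≤ (q' ^ j) ^ 2 := pow_le_pow_left₀ (by linarith) hq'j 2
        _ = q' ^ (2 * j) := by rw [← pow_mul, mul_comm]
    have hfin : ((j : ℝ) * ε) ^ 2 ≤ (2 * j : ℝ) * m * C := by
      calc ((j : ℝ) * ε) ^ 2 ≤ q' ^ (2 * j) := hsq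
        _ ≤ ((2 * j : ℕ) : ℝ) * m * C := hb
        _ = (2 * j : ℝ) * m * C := by push_cast; ring
    have hjpos : (0:ℝ) < (j : ℝ) := by
      exact_mod_cast Nat.lt_of_lt_of_le Nat.zero_lt_one hj1
    have hmC : (0:ℝ) < (m : ℝ) * C := by
      have : (0:ℝ) < (m:ℝ) := by exact_mod_cast hm1
      positivity
    have hcontra : 2 * (m : ℝ) * C < (j : ℝ) * ε ^ 2 :=
      (div_lt_iff₀ (by positivity)).1 hjge
    nlinarith
end
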